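/- Let G be a finite connected arc-transitive simple graph, and consider the simple random walk X(t) on G, which is the random walk on the radio hypergraph R(G). For distinct vertices u and v, define the radio hitting time h̃(u,v) = E[inf{t ≥ 0 : X(t) ∈ N(v)} | X(0)=u], the first time the walk transmits from a neighbor of v. Then for every neighbor w of v, h̃(u,v) = h(u,v) − h(w,v), where h denotes hitting times of the simple random walk on G. -/

import Mathlib

open scoped ENNReal Classical
open Finset

namespace GraphWalk

variable {V : Type} [Fintype V] [DecidableEq V]

/-- One step of the simple random walk on a graph: from `v`, move to a uniformly chosen
neighbor. -/
noncomputable def stepProb (G : SimpleGraph V) (v u : V) : ℝ≥0∞ :=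
  if G.Adj v u then ((Finset.univ.filter fun x => G.Adj v x).card : ℝ≥0∞)⁻¹ else 0

/-- The vertex visited at time `s` along a trajectory `w` started at `v`. -/
def vAt (v : V) {t : ℕ} (w : Fin t → V) : ℕ → V
  | 0 => v
  | s + 1 => if h : s < t then w ⟨s, h⟩ else v

/-- Probability of a finite trajectory of the simple random walk started at `v`. -/
noncomputable def trajProb (G : SimpleGraph V) (v : V) {t : ℕ} (w : Fin t → V) : ℝ≥0∞ :=
  ∏ s : Fin t, stepProb G (vAt v w s) (w s)

/-- Probability that the length-`t` trajectory of the walk started at `v` satisfies `A`. -/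
noncomputable def pr (G : SimpleGraph V) (v : V) (t : ℕ)
    (A : (Fin t → V) → Prop) : ℝ≥0∞ :=
  ∑ w : Fin t → V, if A w then trajProb G v w else 0

/-- Hitting time of a set: `h(v,S) = E[inf{t ≥ 0 : X(t) ∈ S}]`, computed as
`∑_t Pr[X(s) ∉ S for all s ≤ t]`. -/
noncomputable def hitSet (G : SimpleGraph V) (v : V) (S : Set V) : ℝ≥0∞ :=
  ∑' t : ℕ, pr G v t (fun w => ∀ s : ℕ, s ≤ t → vAt v w s ∉ S)

/-- Hitting time `h(v,u)` of a vertex. -/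
noncomputable def hit (G : SimpleGraph V) (v u : V) : ℝ≥0∞ := hitSet G v {u}

/-- Radio hitting time `h̃(u,v) = E[inf{t ≥ 0 : X(t) ∈ N(v)}]` on the radio hypergraph
of `G`: the first time the walk transmits from a neighbor of `v`. -/
noncomputable def radioHit (G : SimpleGraph V) (u v : V) : ℝ≥0∞ :=
  hitSet G u (G.neighborSet v)

/-- Expected radio cover time from `v` on the radio hypergraph of `G`: vertex `u` has
heard the walk by time `t` iff `u = X(0)` or `X(s)` is a neighbor of `u` for some
`s < t`. -/
noncomputable def radioCoverFrom (G : SimpleGraph V) (v : V) : ℝ≥0∞ :=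
  ∑' t : ℕ, pr G v t
    (fun w => ∃ u : V, ¬(u = v ∨ ∃ s : ℕ, s < t ∧ G.Adj (vAt v w s) u))

/-- The radio cover time of the radio hypergraph of `G`. -/
noncomputable def radioCover (G : SimpleGraph V) : ℝ≥0∞ := ⨆ v : V, radioCoverFrom G v

end GraphWalk

/-- A simple graph is arc-transitive if its automorphism group acts transitively on
ordered pairs of adjacent vertices. -/
def ArcTransitive {V : Type} (G : SimpleGraph V) : Prop :=
  ∀ ⦃a b a' b' : V⦄, G.Adj a b → G.Adj a' b' →
    ∃ φ : G ≃g G, φ a = a' ∧ φ b = b'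



set_option linter.unusedSectionVars false

namespace GraphWalk
variable {V : Type} [Fintype V] [DecidableEq V]
variable (G : SimpleGraph V)

lemma stepProb_ne_zero {v u : V} (h : G.Adj v u) : stepProb G v u ≠ 0 := by
  simp only [stepProb, if_pos h]
  exact ENNReal.inv_ne_zero.2 (ENNReal.natCast_ne_top _)

lemma stepProb_eq_zero {v u : V} (h : ¬ G.Adj v u) : stepProb G v u = 0 := if_neg h

lemma adj_of_stepProb_ne_zero {v u : V} (h : stepProb G v u ≠ 0) : G.Adj v u := by
  by_contra hc; exact h (stepProb_eq_zero G hc)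

lemma sum_stepProb {v : V} (h : ∃ u, G.Adj v u) : ∑ u, stepProb G v u = 1 := by
  classical
  obtain ⟨u, hu⟩ := h
  have hcard : ((Finset.univ.filter fun x => G.Adj v x).card : ℝ≥0∞) ≠ 0 := by
    simp only [ne_eq, Nat.cast_eq_zero, Finset.card_eq_zero]
    intro hempty
    have : u ∈ Finset.univ.filter fun x => G.Adj v x := by simp [hu]
    simp [hempty] at this
  calc ∑ u, stepProb G v u
      = ∑ u ∈ Finset.univ.filter (fun x => G.Adj v x),
          ((Finset.univ.filter fun x => G.Adj v x).card : ℝ≥0∞)⁻¹ := by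
        rw [Finset.sum_filter]; exact Finset.sum_congr rfl fun x _ => rfl
    _ = ((Finset.univ.filter fun x => G.Adj v x).card : ℝ≥0∞) *
          ((Finset.univ.filter fun x => G.Adj v x).card : ℝ≥0∞)⁻¹ := by
        rw [Finset.sum_const, nsmul_eq_mul]
    _ = 1 := ENNReal.mul_inv_cancel hcard (ENNReal.natCast_ne_top _)

lemma vAt_zero (v : V) {t : ℕ} (w : Fin t → V) : vAt v w 0 = v := rfl

lemma vAt_succ (v : V) {t : ℕ} (w : Fin t → V) {s : ℕ} (h : s < t) :
    vAt v w (s + 1) = w ⟨s, h⟩ := by simp [vAt, h]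

end GraphWalk


namespace GraphWalk
variable {V : Type} [Fintype V] [DecidableEq V] (G : SimpleGraph V)

lemma vAt_append_left (v : V) {s r : ℕ} (w₁ : Fin s → V) (w₂ : Fin r → V) :
    ∀ i ≤ s, vAt v (Fin.append w₁ w₂) i = vAt v w₁ i := by
  intro i hi
  cases i with
  | zero => rfl
  | succ j =>
    have hj : j < s := hi
    have hj' : j < s + r := lt_of_lt_of_le hj (Nat.le_add_right _ _)
    rw [vAt_succ v _ hj', vAt_succ v _ hj]
    exact Fin.append_left w₁ w₂ ⟨j, hj⟩

lemma vAt_append_right (v : V) {s r : ℕ} (w₁ : Fin s → V) (w₂ : Fin r → V) :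
    ∀ j ≤ r, vAt v (Fin.append w₁ w₂) (s + j) = vAt (vAt v w₁ s) w₂ j := by
  intro j hj
  cases j with
  | zero => simpa [vAt_zero] using vAt_append_left v w₁ w₂ s le_rfl
  | succ k =>
    have hk : k < r := hj
    have hk' : s + k < s + r := by omega
    have : s + (k + 1) = (s + k) + 1 := by omega
    rw [this, vAt_succ v _ hk', vAt_succ _ _ hk]
    exact Fin.append_right w₁ w₂ ⟨k, hk⟩

lemma trajProb_append (v : V) {s r : ℕ} (w₁ : Fin s → V) (w₂ : Fin r → V) :
    trajProb G v (Fin.append w₁ w₂) =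
      trajProb G v w₁ * trajProb G (vAt v w₁ s) w₂ := by
  unfold trajProb
  rw [Fin.prod_univ_add]
  congr 1
  · refine Finset.prod_congr rfl fun i _ => ?_
    have h1 : vAt v (Fin.append w₁ w₂) (Fin.castAdd r i : Fin (s+r)) = vAt v w₁ i := by
      have := vAt_append_left v w₁ w₂ i (le_of_lt i.2)
      simpa using this
    rw [h1, Fin.append_left]
  · refine Finset.prod_congr rfl fun j _ => ?_
    have h1 : vAt v (Fin.append w₁ w₂) ((Fin.natAdd s j : Fin (s+r)) : ℕ) =
        vAt (vAt v w₁ s) w₂ j := by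
      have := vAt_append_right v w₁ w₂ j (le_of_lt j.2)
      simpa using this
    rw [h1, Fin.append_right]

lemma pr_split (v : V) {s r : ℕ} (A : (Fin (s + r) → V) → Prop) :
    pr G v (s + r) A = ∑ w₁ : Fin s → V, ∑ w₂ : Fin r → V,
      if A (Fin.append w₁ w₂) then trajProb G v w₁ * trajProb G (vAt v w₁ s) w₂ else 0 := by
  unfold pr
  rw [← Equiv.sum_comp (Fin.appendEquiv s r) (fun w => if A w then trajProb G v w else 0),
    Fintype.sum_prod_type]
  refine Finset.sum_congr rfl fun w₁ _ => Finset.sum_congr rfl fun w₂ _ => ?_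
  show (if A (Fin.append w₁ w₂) then trajProb G v (Fin.append w₁ w₂) else 0) = _
  rw [trajProb_append]

end GraphWalk

namespace GraphWalk
variable {V : Type} [Fintype V] [DecidableEq V] (G : SimpleGraph V)

lemma support_adj {v : V} {t : ℕ} {w : Fin t → V} (h : trajProb G v w ≠ 0) :
    ∀ i < t, G.Adj (vAt v w i) (vAt v w (i + 1)) := by
  intro i hi
  rw [vAt_succ v w hi]
  have := Finset.prod_ne_zero_iff.1 h ⟨i, hi⟩ (Finset.mem_univ _)
  exact adj_of_stepProb_ne_zero G this

lemma pr_congr {v : V} {t : ℕ} {A B : (Fin t → V) → Prop}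
    (h : ∀ w, trajProb G v w ≠ 0 → (A w ↔ B w)) : pr G v t A = pr G v t B := by
  refine Finset.sum_congr rfl fun w _ => ?_
  by_cases hz : trajProb G v w = 0
  · simp [hz]
  · simp only [h w hz]

lemma pr_le_pr {v : V} {t : ℕ} {A B : (Fin t → V) → Prop}
    (h : ∀ w, trajProb G v w ≠ 0 → A w → B w) : pr G v t A ≤ pr G v t B := by
  refine Finset.sum_le_sum fun w _ => ?_
  by_cases hz : trajProb G v w = 0
  · by_cases hA : A w <;> by_cases hB : B w <;> simp [hA, hB, hz]
  · by_cases hA : A w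
    · simp [hA, h w hz hA]
    · simp [hA]

lemma pr_add_compl {v : V} {t : ℕ} (A : (Fin t → V) → Prop) :
    pr G v t A + pr G v t (fun w => ¬ A w) = ∑ w : Fin t → V, trajProb G v w := by
  unfold pr
  rw [← Finset.sum_add_distrib]
  refine Finset.sum_congr rfl fun w _ => ?_
  by_cases hA : A w <;> simp [hA]

/-- total mass of length-`t` trajectories, assuming every vertex has a neighbor -/
lemma mass_one (hnb : ∀ x : V, ∃ y, G.Adj x y) (v : V) (t : ℕ) :
    ∑ w : Fin t → V, trajProb G v w = 1 := by
  induction t generalizing v with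
  | zero => simp [trajProb]
  | succ n ih =>
    have h := pr_split G v (s := n) (r := 1) (fun _ => True)
    simp only [if_true] at h
    have hp : pr G v (n + 1) (fun _ => True) = ∑ w : Fin (n+1) → V, trajProb G v w := by
      unfold pr; simp
    rw [hp] at h
    rw [h]
    have hone : ∀ x : V, ∑ w₂ : Fin 1 → V, trajProb G x w₂ = 1 := by
      intro x
      rw [← Equiv.sum_comp (Equiv.funUnique (Fin 1) V).symm (fun w => trajProb G x w)]
      have : ∀ y : V, trajProb G x ((Equiv.funUnique (Fin 1) V).symm y) = stepProb G x y := by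
        intro y; unfold trajProb; simp [Equiv.funUnique]; rfl
      rw [Finset.sum_congr rfl fun y _ => this y]
      exact sum_stepProb G (hnb x)
    calc ∑ w₁ : Fin n → V, ∑ w₂ : Fin 1 → V, trajProb G v w₁ * trajProb G (vAt v w₁ n) w₂
        = ∑ w₁ : Fin n → V, trajProb G v w₁ * 1 := by
          refine Finset.sum_congr rfl fun w₁ _ => ?_
          rw [← Finset.mul_sum, hone]
      _ = 1 := by simpa using ih v

lemma pr_le_one (hnb : ∀ x : V, ∃ y, G.Adj x y) (v : V) (t : ℕ)
    (A : (Fin t → V) → Prop) : pr G v t A ≤ 1 := by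
  rw [← mass_one G hnb v t]
  exact Finset.sum_le_sum fun w _ => by by_cases hA : A w <;> simp [hA]

end GraphWalk

namespace GraphWalk
variable {V : Type} [Fintype V] [DecidableEq V] (G : SimpleGraph V)

/-- probability of avoiding `S` at all times `< t` -/
noncomputable def av (v : V) (S : Set V) (t : ℕ) : ℝ≥0∞ :=
  pr G v t (fun w => ∀ i < t, vAt v w i ∉ S)

lemma av_zero (v : V) (S : Set V) : av G v S 0 = 1 := by
  unfold av pr
  simp [trajProb]

lemma av_split (v : V) (S : Set V) (s r : ℕ) :
    av G v S (s + r) = ∑ w₁ : Fin s → V,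
      if (∀ i < s, vAt v w₁ i ∉ S) then trajProb G v w₁ * av G (vAt v w₁ s) S r else 0 := by
  unfold av
  rw [pr_split]
  refine Finset.sum_congr rfl fun w₁ _ => ?_
  have key : ∀ w₂ : Fin r → V,
      (∀ i < s + r, vAt v (Fin.append w₁ w₂) i ∉ S) ↔
      ((∀ i < s, vAt v w₁ i ∉ S) ∧ ∀ j < r, vAt (vAt v w₁ s) w₂ j ∉ S) := by
    intro w₂
    constructor
    · intro h
      refine ⟨fun i hi => ?_, fun j hj => ?_⟩
      · rw [← vAt_append_left v w₁ w₂ i (le_of_lt hi)]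
        exact h i (lt_of_lt_of_le hi (Nat.le_add_right _ _))
      · rw [← vAt_append_right v w₁ w₂ j (le_of_lt hj)]
        exact h (s + j) (by omega)
    · rintro ⟨h1, h2⟩ i hi
      by_cases hs : i < s
      · rw [vAt_append_left v w₁ w₂ i (le_of_lt hs)]; exact h1 i hs
      · have : i = s + (i - s) := by omega
        rw [this, vAt_append_right v w₁ w₂ _ (by omega)]
        exact h2 (i - s) (by omega)
  simp only [key]
  by_cases hB : ∀ i < s, vAt v w₁ i ∉ S
  · rw [if_pos hB]
    unfold pr
    rw [Finset.mul_sum]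
    refine Finset.sum_congr rfl fun w₂ _ => ?_
    by_cases hC : ∀ j < r, vAt (vAt v w₁ s) w₂ j ∉ S
    · rw [if_pos ⟨hB, hC⟩, if_pos hC]
    · rw [if_neg (fun hand => hC hand.2), if_neg hC, mul_zero]
  · rw [if_neg hB]
    exact Finset.sum_eq_zero fun w₂ _ => if_neg (fun hand => hB hand.1)

lemma pr_extend (hnb : ∀ x : V, ∃ y, G.Adj x y) (v : V) (P : V → Prop) (s r : ℕ) :
    pr G v (s + r) (fun w => ∀ i ≤ s, P (vAt v w i)) =
      pr G v s (fun w => ∀ i ≤ s, P (vAt v w i)) := by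
  rw [pr_split]
  unfold pr
  refine Finset.sum_congr rfl fun w₁ _ => ?_
  have key : ∀ w₂ : Fin r → V,
      (∀ i ≤ s, P (vAt v (Fin.append w₁ w₂) i)) ↔ (∀ i ≤ s, P (vAt v w₁ i)) := by
    intro w₂
    constructor <;> intro h i hi
    · rw [← vAt_append_left v w₁ w₂ i hi]; exact h i hi
    · rw [vAt_append_left v w₁ w₂ i hi]; exact h i hi
  simp only [key]
  by_cases hB : ∀ i ≤ s, P (vAt v w₁ i)
  · rw [if_pos hB]
    rw [Finset.sum_congr rfl (fun (w₂ : Fin r → V) _ =>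
      (if_pos hB : _ = trajProb G v w₁ * trajProb G (vAt v w₁ s) w₂))]
    rw [← Finset.mul_sum, mass_one G hnb, mul_one]
  · rw [if_neg hB]
    exact Finset.sum_eq_zero fun w₂ _ => if_neg hB

lemma av_succ (hnb : ∀ x : V, ∃ y, G.Adj x y) (v : V) (S : Set V) (t : ℕ) :
    av G v S (t + 1) = pr G v t (fun w => ∀ i ≤ t, vAt v w i ∉ S) := by
  unfold av
  have : (fun (w : Fin (t+1) → V) => ∀ i < t + 1, vAt v w i ∉ S) =
      (fun w => ∀ i ≤ t, vAt v w i ∉ S) := by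
    funext w; simp only [Nat.lt_succ_iff]
  rw [this]
  exact pr_extend G hnb v (fun x => x ∉ S) t 1

lemma hitSet_eq_sum_av (hnb : ∀ x : V, ∃ y, G.Adj x y) (v : V) (S : Set V) :
    hitSet G v S = ∑' t : ℕ, av G v S (t + 1) := by
  unfold hitSet
  exact tsum_congr fun t => (av_succ G hnb v S t).symm

lemma av_le_one (hnb : ∀ x : V, ∃ y, G.Adj x y) (v : V) (S : Set V) (t : ℕ) :
    av G v S t ≤ 1 := pr_le_one G hnb v t _

lemma av_add_le_mul (v : V) (S : Set V) {δ : ℝ≥0∞} (s r : ℕ)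
    (hδ : ∀ y : V, av G y S r ≤ δ) :
    av G v S (s + r) ≤ av G v S s * δ := by
  rw [av_split]
  have hrhs : av G v S s = ∑ w₁ : Fin s → V,
      if (∀ i < s, vAt v w₁ i ∉ S) then trajProb G v w₁ else 0 := by
    unfold av pr
    exact Finset.sum_congr rfl fun w _ => ite_congr rfl (fun _ => rfl) (fun _ => rfl)
  rw [hrhs, Finset.sum_mul]
  refine Finset.sum_le_sum fun w₁ _ => ?_
  by_cases hB : ∀ i < s, vAt v w₁ i ∉ S
  · rw [if_pos hB, if_pos hB]
    exact mul_le_mul_right (hδ _) _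
  · rw [if_neg hB, if_neg hB, zero_mul]

lemma av_antitone (hnb : ∀ x : V, ∃ y, G.Adj x y) (v : V) (S : Set V) :
    Antitone (av G v S) := by
  have h1 : ∀ t, av G v S (t + 1) ≤ av G v S t := by
    intro t
    have := av_add_le_mul G v S t 1 (fun y => av_le_one G hnb y S 1)
    simpa using this
  exact antitone_nat_of_succ_le h1

end GraphWalk

namespace GraphWalk
variable {V : Type} [Fintype V] [DecidableEq V] (G : SimpleGraph V)

lemma exists_adj_of_connected (hconn : G.Connected) (hcard : 1 < Fintype.card V) :
    ∀ x : V, ∃ y, G.Adj x y := by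
  intro x
  obtain ⟨y, hy⟩ := Fintype.exists_ne_of_one_lt_card hcard x
  obtain ⟨p⟩ := hconn.preconnected x y
  cases p with
  | nil => exact absurd rfl hy.symm
  | cons h _ => exact ⟨_, h⟩

/-- a positive-probability trajectory of length `card V` that visits `v`. -/
lemma exists_good_traj (hconn : G.Connected) (y v : V) {z : V} (hz : G.Adj v z) :
    ∃ w : Fin (Fintype.card V) → V,
      trajProb G y w ≠ 0 ∧ ∃ i < Fintype.card V, vAt y w i = v := by
  classical
  obtain ⟨p0⟩ := hconn.preconnected y v
  set q : G.Walk y v := (p0.toPath : G.Path y v).1 with hq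
  have hqpath : q.IsPath := (p0.toPath).2
  set ℓ := q.length with hℓ
  have hℓlt : ℓ < Fintype.card V := hqpath.length_lt
  set n := Fintype.card V with hn
  -- the infinite itinerary
  set f : ℕ → V := fun k => if k ≤ ℓ then q.getVert k else (if Even (k - ℓ) then v else z)
    with hf
  have hf0 : f 0 = y := by simp [hf, q.getVert_zero]
  have hfℓ : f ℓ = v := by simp [hf, q.getVert_length]; exact q.getVert_length
  have hadj : ∀ k, G.Adj (f k) (f (k + 1)) := by
    intro k
    rcases lt_trichotomy k ℓ with hk | hk | hk
    · have h1 : k ≤ ℓ := le_of_lt hk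
      have h2 : k + 1 ≤ ℓ := hk
      simp only [hf, if_pos h1, if_pos h2]
      exact q.adj_getVert_succ hk
    · have h1 : k ≤ ℓ := hk.le
      have h2 : ¬ (k + 1 ≤ ℓ) := by omega
      have h3 : ¬ Even (k + 1 - ℓ) := by
        rw [show k + 1 - ℓ = 1 by omega]; decide
      simp only [hf, if_pos h1, if_neg h2, if_neg h3]
      have hgv : q.getVert k = v := by rw [hk]; exact q.getVert_length
      rw [hgv]; exact hz
    · have h1 : ¬ (k ≤ ℓ) := by omega
      have h2 : ¬ (k + 1 ≤ ℓ) := by omega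
      have hs : k + 1 - ℓ = (k - ℓ) + 1 := by omega
      simp only [hf, if_neg h1, if_neg h2, hs]
      by_cases he : Even (k - ℓ)
      · rw [if_pos he, if_neg (by simpa [Nat.even_add_one] using he)]
        exact hz
      · rw [if_neg he, if_pos (by simpa [Nat.even_add_one] using he)]
        exact hz.symm
  refine ⟨fun i => f (i + 1), ?_, ℓ, hℓlt, ?_⟩
  · have hvAt : ∀ i ≤ n, vAt y (fun i : Fin n => f (i + 1)) i = f i := by
      intro i hi
      cases i with
      | zero => simp [vAt_zero, hf0]
      | succ j => rw [vAt_succ y _ (show j < n from hi)]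
    rw [trajProb]
    rw [Finset.prod_ne_zero_iff]
    intro i _
    rw [hvAt i (le_of_lt i.2)]
    exact stepProb_ne_zero G (hadj i)
  · have : vAt y (fun i : Fin n => f (i + 1)) ℓ = f ℓ := by
      cases hℓ' : ℓ with
      | zero => simp [vAt_zero, hf0, hℓ' ▸ hfℓ]
      | succ j => rw [vAt_succ y _ (show j < n by omega)]
    rw [this, hfℓ]

end GraphWalk

namespace GraphWalk
variable {V : Type} [Fintype V] [DecidableEq V] (G : SimpleGraph V)

lemma av_lt_one (hconn : G.Connected) (hcard : 1 < Fintype.card V)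
    (y v : V) {z : V} (hz : G.Adj v z) :
    av G y ({v} : Set V) (Fintype.card V) < 1 := by
  classical
  have hnb := exists_adj_of_connected G hconn hcard
  set n := Fintype.card V with hn
  obtain ⟨wstar, hw0, i, hi, hiv⟩ := exists_good_traj G hconn y v hz
  have hnA : ¬ (∀ j < n, vAt y wstar j ∉ ({v} : Set V)) := by
    intro h; exact h i hi (by simp [hiv])
  have hsum : av G y ({v} : Set V) n +
      pr G y n (fun w => ¬ ∀ j < n, vAt y w j ∉ ({v} : Set V)) = 1 := by
    rw [av, pr_add_compl, mass_one G hnb]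
  have hpos : pr G y n (fun w => ¬ ∀ j < n, vAt y w j ∉ ({v} : Set V)) ≠ 0 := by
    intro h0
    rw [pr, Finset.sum_eq_zero_iff] at h0
    have h1 := h0 wstar (Finset.mem_univ _)
    rw [if_pos hnA] at h1
    exact hw0 h1
  refine lt_of_le_of_ne (av_le_one G hnb y _ n) fun h1 => ?_
  rw [h1] at hsum
  apply hpos
  have h2 : (1 : ℝ≥0∞) + pr G y n (fun w => ¬ ∀ j < n, vAt y w j ∉ ({v} : Set V)) = 1 + 0 := by
    rw [add_zero]; exact hsum
  exact (ENNReal.add_right_inj (by simp)).1 h2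

lemma hit_ne_top (hconn : G.Connected) (hcard : 1 < Fintype.card V)
    (x v : V) {z : V} (hz : G.Adj v z) : hit G x v ≠ ⊤ := by
  classical
  have hnb := exists_adj_of_connected G hconn hcard
  set n := Fintype.card V with hn
  have hn0 : n ≠ 0 := by omega
  haveI : NeZero n := ⟨hn0⟩
  haveI : Nonempty V := ⟨v⟩
  obtain ⟨y₀, hy₀⟩ := Finite.exists_max (fun y : V => av G y ({v} : Set V) n)
  set δ := av G y₀ ({v} : Set V) n with hδdef
  have hδ1 : δ < 1 := av_lt_one G hconn hcard y₀ v hz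
  have hpow : ∀ k : ℕ, av G x ({v} : Set V) (k * n) ≤ δ ^ k := by
    intro k
    induction k with
    | zero => simpa using le_of_eq (av_zero G x _)
    | succ m ih =>
      have : (m + 1) * n = m * n + n := by ring
      rw [this, pow_succ]
      calc av G x ({v} : Set V) (m * n + n)
          ≤ av G x ({v} : Set V) (m * n) * δ := av_add_le_mul G x _ _ _ (fun y => hy₀ y)
        _ ≤ δ ^ m * δ := mul_le_mul_left ih δ
  have hbound : ∀ t : ℕ, av G x ({v} : Set V) t ≤ δ ^ (t / n) := by
    intro t
    calc av G x ({v} : Set V) t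
        ≤ av G x ({v} : Set V) ((t / n) * n) :=
          av_antitone G hnb x _ (Nat.div_mul_le_self t n)
      _ ≤ δ ^ (t / n) := hpow _
  have hfin : (∑' t : ℕ, (δ : ℝ≥0∞) ^ (t / n)) ≠ ⊤ := by
    have heq : (∑' t : ℕ, (δ : ℝ≥0∞) ^ (t / n)) = ∑' p : ℕ × Fin n, δ ^ p.1 := by
      exact ((Nat.divModEquiv n).tsum_eq (fun p : ℕ × Fin n => δ ^ p.1))
    have h2 : ∑' (p : ℕ × Fin n), δ ^ p.1 = ∑' (k : ℕ), ∑' (_ : Fin n), δ ^ k :=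
      ENNReal.tsum_prod (f := fun k (_ : Fin n) => δ ^ k)
    have h3 : ∀ k : ℕ, (∑' _ : Fin n, δ ^ k) = (n : ℝ≥0∞) * δ ^ k := by
      intro k; rw [tsum_fintype]; simp [Finset.sum_const, nsmul_eq_mul]
    rw [heq, h2, tsum_congr h3, ENNReal.tsum_mul_left, ENNReal.tsum_geometric]
    exact ENNReal.mul_ne_top (ENNReal.natCast_ne_top n)
      (ENNReal.inv_ne_top.2 (tsub_pos_of_lt hδ1).ne')
  refine ne_top_of_le_ne_top hfin ?_
  rw [hit, hitSet_eq_sum_av G hnb]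
  calc ∑' t : ℕ, av G x ({v} : Set V) (t + 1)
      ≤ ∑' t : ℕ, av G x ({v} : Set V) t :=
        Summable.tsum_le_tsum (fun t => av_antitone G hnb x _ (Nat.le_succ t))
          ENNReal.summable ENNReal.summable
    _ ≤ ∑' t : ℕ, (δ : ℝ≥0∞) ^ (t / n) :=
        Summable.tsum_le_tsum (fun t => hbound t) ENNReal.summable ENNReal.summable

end GraphWalk

namespace GraphWalk
variable {V : Type} [Fintype V] [DecidableEq V] (G : SimpleGraph V)

lemma stepProb_aut (φ : G ≃g G) (a b : V) :
    stepProb G (φ a) (φ b) = stepProb G a b := by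
  unfold stepProb
  have hadj : G.Adj (φ a) (φ b) ↔ G.Adj a b := φ.map_adj_iff
  have hcard : (Finset.univ.filter fun x => G.Adj (φ a) x).card =
      (Finset.univ.filter fun x => G.Adj a x).card := by
    refine Finset.card_bij' (fun x _ => φ.symm x) (fun x _ => φ x) ?_ ?_ ?_ ?_
    · intro x hx
      simp only [Finset.mem_filter, Finset.mem_univ, true_and] at hx ⊢
      exact φ.map_adj_iff.1 (by simpa using hx)
    · intro x hx
      simp only [Finset.mem_filter, Finset.mem_univ, true_and] at hx ⊢
      exact φ.map_adj_iff.2 hx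
    · intro x _; simp
    · intro x _; simp
  rw [hcard]
  by_cases h : G.Adj a b
  · rw [if_pos (hadj.2 h), if_pos h]
  · rw [if_neg (fun hc => h (hadj.1 hc)), if_neg h]

lemma vAt_aut (φ : G ≃g G) (x : V) {t : ℕ} (w : Fin t → V) (s : ℕ) :
    vAt (φ x) (fun i => φ (w i)) s = φ (vAt x w s) := by
  cases s with
  | zero => rfl
  | succ j =>
    by_cases hj : j < t
    · rw [vAt_succ _ _ hj, vAt_succ _ _ hj]
    · show (if h : j < t then _ else _) = _
      rw [dif_neg hj]
      show _ = φ (if h : j < t then _ else _)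
      rw [dif_neg hj]

lemma trajProb_aut (φ : G ≃g G) (x : V) {t : ℕ} (w : Fin t → V) :
    trajProb G (φ x) (fun i => φ (w i)) = trajProb G x w := by
  unfold trajProb
  refine Finset.prod_congr rfl fun i _ => ?_
  rw [vAt_aut G φ x w i]
  exact stepProb_aut G φ _ _

lemma pr_aut (φ : G ≃g G) (x : V) (t : ℕ) (A : (Fin t → V) → Prop) :
    pr G (φ x) t A = pr G x t (fun w => A (fun i => φ (w i))) := by
  unfold pr
  refine (Fintype.sum_equiv (Equiv.arrowCongr (Equiv.refl (Fin t)) φ.toEquiv)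
    (fun w => if A (fun i => φ (w i)) then trajProb G x w else 0)
    (fun w => if A w then trajProb G (φ x) w else 0) (fun w => ?_)).symm
  show _ = (if A (fun i => φ (w i)) then trajProb G (φ x) (fun i => φ (w i)) else 0)
  rw [trajProb_aut]

lemma hit_aut (φ : G ≃g G) (x y : V) : hit G (φ x) (φ y) = hit G x y := by
  unfold hit hitSet
  refine tsum_congr fun t => ?_
  rw [pr_aut G φ x t]
  refine pr_congr G fun w _ => ?_
  constructor <;> intro h s hs <;> have h2 := h s hs
  · intro hc
    apply h2
    rw [vAt_aut G φ x w s]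
    simp only [Set.mem_singleton_iff] at hc ⊢
    rw [hc]
  · intro hc
    apply h2
    rw [vAt_aut G φ x w s] at hc
    simp only [Set.mem_singleton_iff] at hc ⊢
    exact φ.toEquiv.injective hc

lemma hit_nbr_eq (htrans : ArcTransitive G) {v w x : V}
    (hw : G.Adj w v) (hx : G.Adj x v) : hit G x v = hit G w v := by
  obtain ⟨φ, hφ1, hφ2⟩ := htrans hw hx
  calc hit G x v = hit G (φ w) (φ v) := by rw [hφ1, hφ2]
    _ = hit G w v := hit_aut G φ w v

end GraphWalk

namespace GraphWalk
variable {V : Type} [Fintype V] [DecidableEq V] (G : SimpleGraph V)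

/-- decompose an event according to the value of a statistic `g` -/
lemma pr_sum_fiber {α : Type} [DecidableEq α] (u : V) (t : ℕ) (A : (Fin t → V) → Prop)
    (g : (Fin t → V) → α) (F : Finset α) (hmem : ∀ w, A w → g w ∈ F) :
    pr G u t A = ∑ x ∈ F, pr G u t (fun w => A w ∧ g w = x) := by
  unfold pr
  rw [Finset.sum_comm]
  refine Finset.sum_congr rfl fun w _ => ?_
  by_cases hA : A w
  · rw [if_pos hA]
    exact ((Finset.sum_eq_single_of_mem (g w) (hmem w hA) fun x _ hne =>
      if_neg fun hc => hne hc.2.symm).trans (if_pos ⟨hA, rfl⟩)).symm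
  · rw [if_neg hA]
    exact (Finset.sum_eq_zero fun x _ => if_neg fun hc => hA hc.1).symm

lemma pr_cases (u : V) (t : ℕ) (A C : (Fin t → V) → Prop) :
    pr G u t A = pr G u t (fun w => A w ∧ C w) + pr G u t (fun w => A w ∧ ¬ C w) := by
  unfold pr
  rw [← Finset.sum_add_distrib]
  refine Finset.sum_congr rfl fun w _ => ?_
  by_cases hA : A w
  · by_cases hC : C w
    · rw [if_pos hA, if_pos ⟨hA, hC⟩, if_neg (fun hc => hc.2 hC), add_zero]
    · rw [if_pos hA, if_neg (fun hc => hC hc.2), if_pos ⟨hA, hC⟩, zero_add]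
  · rw [if_neg hA, if_neg (fun hc => hA hc.1), if_neg (fun hc => hA hc.1), add_zero]

/-- strong-Markov style factorization -/
lemma pr_split_event (v : V) {s r : ℕ} (B : (Fin s → V) → Prop) (x : V)
    (C : (Fin r → V) → Prop) (hBx : ∀ w₁, B w₁ → vAt v w₁ s = x)
    (A : (Fin (s + r) → V) → Prop)
    (hA : ∀ w₁ w₂, A (Fin.append w₁ w₂) ↔ (B w₁ ∧ C w₂)) :
    pr G v (s + r) A = pr G v s B * pr G x r C := by
  rw [pr_split]
  unfold pr
  rw [Finset.sum_mul]
  refine Finset.sum_congr rfl fun w₁ _ => ?_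
  by_cases hB : B w₁
  · rw [if_pos hB, hBx w₁ hB, Finset.mul_sum]
    refine Finset.sum_congr rfl fun w₂ _ => ?_
    by_cases hC : C w₂
    · rw [if_pos ((hA w₁ w₂).2 ⟨hB, hC⟩), if_pos hC]
    · rw [if_neg (fun hc => hC ((hA w₁ w₂).1 hc).2), if_neg hC, mul_zero]
  · rw [if_neg hB, zero_mul]
    exact Finset.sum_eq_zero fun w₂ _ => if_neg fun hc => hB ((hA w₁ w₂).1 hc).1

/-- on the support, avoiding `N(v)` strictly before `s` forces avoiding `v` up to `s` -/
lemma avoidN_imp_avoid_v {u v : V} (huv : u ≠ v) {t : ℕ} {w : Fin t → V}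
    (h0 : trajProb G u w ≠ 0) {s : ℕ} (hs : s ≤ t)
    (hN : ∀ i < s, vAt u w i ∉ G.neighborSet v) :
    ∀ i ≤ s, vAt u w i ≠ v := by
  intro i hi
  cases i with
  | zero => exact huv
  | succ j =>
    intro hc
    have hadj := support_adj G h0 j (by omega)
    rw [hc] at hadj
    exact hN j (by omega) hadj.symm

end GraphWalk

namespace GraphWalk
variable {V : Type} [Fintype V] [DecidableEq V] (G : SimpleGraph V)

/-- first time the walk from `u` is in `N(v)`, or `t+1` if never -/
noncomputable def tau (u v : V) (t : ℕ) (w : Fin t → V) : ℕ :=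
  if h : ∃ i, i ≤ t ∧ vAt u w i ∈ G.neighborSet v then Nat.find h else t + 1

lemma tau_le (u v : V) (t : ℕ) (w : Fin t → V) : tau G u v t w ≤ t + 1 := by
  unfold tau
  split
  · next h => have := (Nat.find_spec h).1; omega
  · omega

lemma tau_eq_top_iff (u v : V) (t : ℕ) (w : Fin t → V) :
    tau G u v t w = t + 1 ↔ ∀ i ≤ t, vAt u w i ∉ G.neighborSet v := by
  unfold tau
  split
  · next h =>
    constructor
    · intro he
      exfalso
      have h1 := (Nat.find_spec h).1
      omega
    · intro hall
      exact absurd ((Nat.find_spec h).2) (hall _ (Nat.find_spec h).1)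
  · next h =>
    push_neg at h
    exact ⟨fun _ i hi => h i hi, fun _ => rfl⟩

lemma tau_eq_iff (u v : V) (t : ℕ) (w : Fin t → V) {s : ℕ} (hs : s ≤ t) :
    tau G u v t w = s ↔
      ((∀ i < s, vAt u w i ∉ G.neighborSet v) ∧ vAt u w s ∈ G.neighborSet v) := by
  unfold tau
  split
  · next h =>
    rw [Nat.find_eq_iff]
    constructor
    · rintro ⟨⟨_, hmem⟩, hmin⟩
      exact ⟨fun i hi hin => hmin i hi ⟨by omega, hin⟩, hmem⟩
    · rintro ⟨h1, h2⟩
      exact ⟨⟨hs, h2⟩, fun i hi hc => h1 i hi hc.2⟩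
  · next h =>
    push_neg at h
    constructor
    · intro he; omega
    · rintro ⟨_, h2⟩; exact absurd h2 (h s hs)

noncomputable def qq (G : SimpleGraph V) (u v : V) (s : ℕ) (x : V) : ℝ≥0∞ :=
  pr G u s (fun w => (∀ i < s, vAt u w i ∉ G.neighborSet v) ∧ vAt u w s = x)

/-- the strong-Markov factorization of one `(s,x)` piece -/
lemma piece (u v x : V) (hx : G.Adj v x) (s r : ℕ) :
    pr G u (s + r) (fun w => ((∀ i < s, vAt u w i ∉ G.neighborSet v) ∧
        vAt u w s ∈ G.neighborSet v ∧
        (∀ j ≤ r, vAt u w (s + j) ∉ ({v} : Set V))) ∧ vAt u w s = x) =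
      qq G u v s x * pr G x r (fun w' => ∀ j ≤ r, vAt x w' j ∉ ({v} : Set V)) := by
  refine pr_split_event G u
    (B := fun w₁ => (∀ i < s, vAt u w₁ i ∉ G.neighborSet v) ∧ vAt u w₁ s = x) x
    (C := fun w₂ => ∀ j ≤ r, vAt x w₂ j ∉ ({v} : Set V)) (fun w₁ h => h.2) _ ?_
  intro w₁ w₂
  constructor
  · rintro ⟨⟨h1, _, h3⟩, h4⟩
    have hx4 : vAt u w₁ s = x := by rw [← vAt_append_left u w₁ w₂ s le_rfl]; exact h4
    refine ⟨⟨fun i hi => ?_, hx4⟩, fun j hj => ?_⟩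
    · rw [← vAt_append_left u w₁ w₂ i (le_of_lt hi)]; exact h1 i hi
    · have := h3 j hj
      rw [vAt_append_right u w₁ w₂ j hj, hx4] at this
      exact this
  · rintro ⟨⟨h1, h2⟩, h3⟩
    have hvs : vAt u (Fin.append w₁ w₂) s = x := by
      rw [vAt_append_left u w₁ w₂ s le_rfl]; exact h2
    refine ⟨⟨fun i hi => ?_, ?_, fun j hj => ?_⟩, hvs⟩
    · rw [vAt_append_left u w₁ w₂ i (le_of_lt hi)]; exact h1 i hi
    · rw [hvs]; exact hx
    · rw [vAt_append_right u w₁ w₂ j hj, h2]; exact h3 j hj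

/-- the master decomposition at a fixed horizon `t` -/
lemma decomp (u v : V) (huv : u ≠ v) (t : ℕ) :
    pr G u t (fun w => ∀ i ≤ t, vAt u w i ∉ ({v} : Set V)) =
      pr G u t (fun w => ∀ i ≤ t, vAt u w i ∉ G.neighborSet v) +
      ∑ s ∈ Finset.range (t + 1), ∑ x ∈ Finset.univ.filter (fun x => G.Adj v x),
        qq G u v s x *
          pr G x (t - s) (fun w' => ∀ j ≤ t - s, vAt x w' j ∉ ({v} : Set V)) := by
  classical
  have step1 := pr_sum_fiber G u t (fun w => ∀ i ≤ t, vAt u w i ∉ ({v} : Set V))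
    (tau G u v t) (Finset.range (t + 2))
    (fun w _ => Finset.mem_range.2 (by have := tau_le G u v t w; omega))
  rw [step1, Finset.sum_range_succ]
  have step2 : pr G u t (fun w => (∀ i ≤ t, vAt u w i ∉ ({v} : Set V)) ∧
      tau G u v t w = t + 1) = pr G u t (fun w => ∀ i ≤ t, vAt u w i ∉ G.neighborSet v) := by
    refine pr_congr G fun w h0 => ?_
    constructor
    · rintro ⟨_, h2⟩; exact (tau_eq_top_iff G u v t w).1 h2
    · intro h
      refine ⟨fun i hi hc => ?_, (tau_eq_top_iff G u v t w).2 h⟩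
      exact avoidN_imp_avoid_v G huv h0 le_rfl (fun j hj => h j (le_of_lt hj)) i hi
        (Set.mem_singleton_iff.1 hc)
  have step3 : ∀ s ∈ Finset.range (t + 1),
      pr G u t (fun w => (∀ i ≤ t, vAt u w i ∉ ({v} : Set V)) ∧ tau G u v t w = s) =
      ∑ x ∈ Finset.univ.filter (fun x => G.Adj v x),
        qq G u v s x *
          pr G x (t - s) (fun w' => ∀ j ≤ t - s, vAt x w' j ∉ ({v} : Set V)) := by
    intro s hs
    rw [Finset.mem_range] at hs
    have hst : s ≤ t := by omega
    obtain ⟨r, rfl⟩ : ∃ r, t = s + r := ⟨t - s, by omega⟩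
    have hts : s + r - s = r := by omega
    rw [hts]
    have ha : pr G u (s + r) (fun w => (∀ i ≤ s + r, vAt u w i ∉ ({v} : Set V)) ∧
        tau G u v (s + r) w = s) =
        pr G u (s + r) (fun w => (∀ i < s, vAt u w i ∉ G.neighborSet v) ∧
          vAt u w s ∈ G.neighborSet v ∧
          (∀ j ≤ r, vAt u w (s + j) ∉ ({v} : Set V))) := by
      refine pr_congr G fun w h0 => ?_
      constructor
      · rintro ⟨hAw, hτw⟩
        obtain ⟨h1, h2⟩ := (tau_eq_iff G u v (s + r) w hst).1 hτw
        exact ⟨h1, h2, fun j hj => hAw (s + j) (by omega)⟩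
      · rintro ⟨h1, h2, h3⟩
        refine ⟨fun i hi hc => ?_, (tau_eq_iff G u v (s + r) w hst).2 ⟨h1, h2⟩⟩
        have hcv : vAt u w i = v := Set.mem_singleton_iff.1 hc
        by_cases his : i ≤ s
        · exact avoidN_imp_avoid_v G huv h0 hst h1 i his hcv
        · have hieq : i = s + (i - s) := by omega
          refine h3 (i - s) (by omega) ?_
          rw [← hieq]; exact hc
    rw [ha]
    have hb := pr_sum_fiber G u (s + r)
      (fun w => (∀ i < s, vAt u w i ∉ G.neighborSet v) ∧
        vAt u w s ∈ G.neighborSet v ∧ (∀ j ≤ r, vAt u w (s + j) ∉ ({v} : Set V)))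
      (fun w => vAt u w s) (Finset.univ.filter (fun x => G.Adj v x))
      (fun w hw => by
        simp only [Finset.mem_filter, Finset.mem_univ, true_and]
        exact hw.2.1)
    rw [hb]
    refine Finset.sum_congr rfl fun x hx => ?_
    have hadj : G.Adj v x := by
      simpa using (Finset.mem_filter.1 hx).2
    exact piece G u v x hadj s r
  rw [Finset.sum_congr rfl step3, step2, add_comm]

end GraphWalk

namespace GraphWalk
variable {V : Type} [Fintype V] [DecidableEq V] (G : SimpleGraph V)

lemma tsum_triangle (D : ℕ → ℕ → ℝ≥0∞) :
    ∑' t : ℕ, ∑ s ∈ Finset.range (t + 1), D s (t - s) = ∑' s : ℕ, ∑' r : ℕ, D s r := by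
  have h1 : ∀ t : ℕ, ∑ s ∈ Finset.range (t + 1), D s (t - s) =
      ∑' s : ℕ, if s ≤ t then D s (t - s) else 0 := by
    intro t
    rw [tsum_eq_sum (s := Finset.range (t + 1))
      (fun b hb => if_neg (by rw [Finset.mem_range] at hb; omega))]
    exact Finset.sum_congr rfl fun s hs =>
      (if_pos (by rw [Finset.mem_range] at hs; omega)).symm
  rw [tsum_congr h1, ENNReal.tsum_comm]
  refine tsum_congr fun s => ?_
  refine tsum_eq_tsum_of_ne_zero_bij (fun r => s + r.1) ?_ ?_ ?_
  · intro x y hxy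
    have : s + (x : ℕ) = s + (y : ℕ) := hxy
    exact Subtype.ext (by omega)
  · intro t ht
    rw [Function.mem_support] at ht
    have hst : s ≤ t := by by_contra hc; exact ht (if_neg hc)
    have hD : D s (t - s) ≠ 0 := by
      intro hc; exact ht (by rw [if_pos hst, hc])
    exact ⟨⟨t - s, hD⟩, by simp; omega⟩
  · intro r
    rw [if_pos (Nat.le_add_right s r.1), Nat.add_sub_cancel_left]

lemma qq_sum_step (hnb : ∀ x : V, ∃ y, G.Adj x y) (u v : V) (s : ℕ) :
    av G u (G.neighborSet v) s =
      (∑ x ∈ Finset.univ.filter (fun x => G.Adj v x), qq G u v s x) +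
      av G u (G.neighborSet v) (s + 1) := by
  classical
  have hcases := pr_cases G u s (fun w => ∀ i < s, vAt u w i ∉ G.neighborSet v)
    (fun w => vAt u w s ∈ G.neighborSet v)
  have h1 : pr G u s (fun w => (∀ i < s, vAt u w i ∉ G.neighborSet v) ∧
      vAt u w s ∈ G.neighborSet v) =
      ∑ x ∈ Finset.univ.filter (fun x => G.Adj v x), qq G u v s x := by
    rw [pr_sum_fiber G u s _ (fun w => vAt u w s)
      (Finset.univ.filter (fun x => G.Adj v x))
      (fun w hw => by
        simp only [Finset.mem_filter, Finset.mem_univ, true_and]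
        exact hw.2)]
    refine Finset.sum_congr rfl fun x hx => ?_
    have hadj : G.Adj v x := by simpa using (Finset.mem_filter.1 hx).2
    refine pr_congr G fun w _ => ?_
    constructor
    · rintro ⟨⟨ha, _⟩, hb⟩; exact ⟨ha, hb⟩
    · rintro ⟨ha, hb⟩; exact ⟨⟨ha, by rw [hb]; exact hadj⟩, hb⟩
  have h2 : pr G u s (fun w => (∀ i < s, vAt u w i ∉ G.neighborSet v) ∧
      ¬ vAt u w s ∈ G.neighborSet v) = av G u (G.neighborSet v) (s + 1) := by
    rw [av_succ G hnb u _ s]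
    refine pr_congr G fun w _ => ?_
    constructor
    · rintro ⟨ha, hb⟩ i hi
      rcases Nat.lt_or_ge i s with h | h
      · exact ha i h
      · have : i = s := by omega
        rw [this]; exact hb
    · intro h
      exact ⟨fun i hi => h i (by omega), h s le_rfl⟩
  rw [av, hcases, h1, h2]

lemma qq_partial (hnb : ∀ x : V, ∃ y, G.Adj x y) (u v : V) (T : ℕ) :
    (∑ s ∈ Finset.range T, ∑ x ∈ Finset.univ.filter (fun x => G.Adj v x), qq G u v s x) +
      av G u (G.neighborSet v) T = 1 := by
  induction T with
  | zero => simp [av_zero]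
  | succ T ih =>
    rw [Finset.sum_range_succ, add_assoc, ← qq_sum_step G hnb u v T]
    exact ih

lemma qq_tsum_one (hnb : ∀ x : V, ∃ y, G.Adj x y) (u v : V)
    (hfin : (∑' t : ℕ, av G u (G.neighborSet v) (t + 1)) ≠ ⊤) :
    (∑' s : ℕ, ∑ x ∈ Finset.univ.filter (fun x => G.Adj v x), qq G u v s x) = 1 := by
  classical
  have hpart := qq_partial G hnb u v
  refine le_antisymm ?_ ?_
  · rw [ENNReal.tsum_eq_iSup_nat]
    refine iSup_le fun T => ?_
    calc (∑ s ∈ Finset.range T, ∑ x ∈ Finset.univ.filter (fun x => G.Adj v x), qq G u v s x)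
        ≤ _ + av G u (G.neighborSet v) T := le_self_add
      _ = 1 := hpart T
  · refine ENNReal.le_of_forall_pos_le_add fun ε hε hlt => ?_
    have hex : ∃ T : ℕ, av G u (G.neighborSet v) T ≤ (ε : ℝ≥0∞) := by
      by_contra hc
      push_neg at hc
      apply hfin
      have hge : ∀ t : ℕ, (ε : ℝ≥0∞) ≤ av G u (G.neighborSet v) (t + 1) :=
        fun t => (hc (t + 1)).le
      have htop : (⊤ : ℝ≥0∞) ≤ ∑' t : ℕ, av G u (G.neighborSet v) (t + 1) := by
        calc (⊤ : ℝ≥0∞) = ∑' _ : ℕ, (ε : ℝ≥0∞) :=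
              (ENNReal.tsum_const_eq_top_of_ne_zero (by exact_mod_cast hε.ne')).symm
          _ ≤ _ := Summable.tsum_le_tsum hge ENNReal.summable ENNReal.summable
      exact top_le_iff.1 htop
    obtain ⟨T, hT⟩ := hex
    calc (1 : ℝ≥0∞)
        = (∑ s ∈ Finset.range T, ∑ x ∈ Finset.univ.filter
            (fun x => G.Adj v x), qq G u v s x) + av G u (G.neighborSet v) T := (hpart T).symm
      _ ≤ (∑' s : ℕ, ∑ x ∈ Finset.univ.filter (fun x => G.Adj v x), qq G u v s x) +
          (ε : ℝ≥0∞) := add_le_add (ENNReal.sum_le_tsum _) hT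

end GraphWalk

namespace GraphWalk
variable {V : Type} [Fintype V] [DecidableEq V] (G : SimpleGraph V)

lemma radioHit_le_hit (hconn : G.Connected) {u v : V} (huv : u ≠ v) :
    radioHit G u v ≤ hit G u v := by
  unfold radioHit hit hitSet
  refine Summable.tsum_le_tsum (fun t => ?_) ENNReal.summable ENNReal.summable
  refine pr_le_pr G fun w0 h0 hA i hi hc => ?_
  exact avoidN_imp_avoid_v G huv h0 le_rfl (fun j hj => hA j (le_of_lt hj)) i hi
    (Set.mem_singleton_iff.1 hc)

lemma main_identity (hconn : G.Connected) (htrans : ArcTransitive G)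
    (u v w : V) (huv : u ≠ v) (hw : G.Adj w v) :
    hit G u v = radioHit G u v + hit G w v := by
  classical
  have hcard : 1 < Fintype.card V := Fintype.one_lt_card_iff_nontrivial.2 ⟨⟨u, v, huv⟩⟩
  have hnb := exists_adj_of_connected G hconn hcard
  have hfinU : hit G u v ≠ ⊤ := hit_ne_top G hconn hcard u v hw.symm
  have hfinR : (∑' t : ℕ, av G u (G.neighborSet v) (t + 1)) ≠ ⊤ := by
    rw [← hitSet_eq_sum_av G hnb]
    exact ne_top_of_le_ne_top hfinU (radioHit_le_hit G hconn huv)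
  have hq1 := qq_tsum_one G hnb u v hfinR
  calc hit G u v
      = ∑' t : ℕ, pr G u t (fun w' => ∀ i ≤ t, vAt u w' i ∉ ({v} : Set V)) := rfl
    _ = ∑' t : ℕ, (pr G u t (fun w' => ∀ i ≤ t, vAt u w' i ∉ G.neighborSet v) +
          ∑ s ∈ Finset.range (t + 1), ∑ x ∈ Finset.univ.filter (fun x => G.Adj v x),
            qq G u v s x *
              pr G x (t - s) (fun w' => ∀ j ≤ t - s, vAt x w' j ∉ ({v} : Set V))) :=
        tsum_congr (decomp G u v huv)
    _ = radioHit G u v + ∑' t : ℕ, ∑ s ∈ Finset.range (t + 1),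
          ∑ x ∈ Finset.univ.filter (fun x => G.Adj v x),
            qq G u v s x *
              pr G x (t - s) (fun w' => ∀ j ≤ t - s, vAt x w' j ∉ ({v} : Set V)) := by
        rw [ENNReal.tsum_add]; rfl
    _ = radioHit G u v + ∑' s : ℕ, ∑' r : ℕ,
          ∑ x ∈ Finset.univ.filter (fun x => G.Adj v x),
            qq G u v s x *
              pr G x r (fun w' => ∀ j ≤ r, vAt x w' j ∉ ({v} : Set V)) := by
        rw [tsum_triangle (fun s r => ∑ x ∈ Finset.univ.filter (fun x => G.Adj v x),
          qq G u v s x * pr G x r (fun w' => ∀ j ≤ r, vAt x w' j ∉ ({v} : Set V)))]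
    _ = radioHit G u v + ∑' s : ℕ,
          ∑ x ∈ Finset.univ.filter (fun x => G.Adj v x), qq G u v s x * hit G w v := by
        congr 1
        refine tsum_congr fun s => ?_
        rw [Summable.tsum_finsetSum (fun x _ => ENNReal.summable)]
        refine Finset.sum_congr rfl fun x hx => ?_
        have hadj : G.Adj v x := by simpa using (Finset.mem_filter.1 hx).2
        rw [ENNReal.tsum_mul_left]
        congr 1
        exact (hit_nbr_eq G htrans hw hadj.symm).symm ▸ rfl
    _ = radioHit G u v + (∑' s : ℕ,
          ∑ x ∈ Finset.univ.filter (fun x => G.Adj v x), qq G u v s x) * hit G w v := by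
        rw [← ENNReal.tsum_mul_right]
        congr 1
        exact tsum_congr fun s => (Finset.sum_mul _ _ _).symm
    _ = radioHit G u v + hit G w v := by rw [hq1, one_mul]

end GraphWalk


/-- In a finite connected arc-transitive graph `G`, for distinct
vertices `u, v` and any neighbor `w` of `v`, the radio hitting time of the random walk
on the radio hypergraph `R(G)` satisfies `h̃(u,v) = h(u,v) - h(w,v)`. -/
theorem arcTransitive_radioHit
    (V : Type) [Fintype V] [DecidableEq V] (G : SimpleGraph V)
    (hconn : G.Connected) (htrans : ArcTransitive G)
    (u v w : V) (huv : u ≠ v) (hw : G.Adj w v) :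
    GraphWalk.radioHit G u v = GraphWalk.hit G u v - GraphWalk.hit G w v := by
  have hcard : 1 < Fintype.card V := Fintype.one_lt_card_iff_nontrivial.2 ⟨⟨u, v, huv⟩⟩
  have hfinW : GraphWalk.hit G w v ≠ ⊤ :=
    GraphWalk.hit_ne_top G hconn hcard w v hw.symm
  rw [GraphWalk.main_identity G hconn htrans u v w huv hw,
    ENNReal.add_sub_cancel_right hfinW]
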